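/- Let V be a finite-dimensional real vector space with a nondegenerate symmetric bilinear form of signature (1, n), and let g be an isometry of V fixing a nonzero isotropic vector v (i.e., g(v) = v and ⟨v, v⟩ = 0). Then every complex eigenvalue of g has absolute value 1. -/

import Mathlib

open Matrix Complex

namespace ParabolicAux

variable {n : ℕ}

/-- real signature (1,n) form formula -/
noncomputable def Br (n : ℕ) (x y : Fin (n + 1) → ℝ) : ℝ :=
  x 0 * y 0 - ∑ i : Fin n, x i.succ * y i.succ

/-- complex signature (1,n) form formula -/
noncomputable def Bc (n : ℕ) (x y : Fin (n + 1) → ℂ) : ℂ :=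
  x 0 * y 0 - ∑ i : Fin n, x i.succ * y i.succ

noncomputable def ofR (x : Fin (n + 1) → ℝ) : Fin (n + 1) → ℂ := fun i => (x i : ℂ)

lemma Br_comm (x y : Fin (n + 1) → ℝ) : Br n x y = Br n y x := by
  unfold Br
  rw [mul_comm]
  congr 1
  exact Finset.sum_congr rfl fun i _ => mul_comm _ _

lemma Bc_add_left (x x' y : Fin (n + 1) → ℂ) :
    Bc n (x + x') y = Bc n x y + Bc n x' y := by
  simp [Bc, add_mul, Finset.sum_add_distrib]; ring

lemma Bc_smul_left (c : ℂ) (x y : Fin (n + 1) → ℂ) :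
    Bc n (c • x) y = c * Bc n x y := by
  simp [Bc, Finset.mul_sum, mul_assoc, mul_sub]

lemma Bc_comm (x y : Fin (n + 1) → ℂ) : Bc n x y = Bc n y x := by
  unfold Bc
  rw [mul_comm]
  congr 1
  exact Finset.sum_congr rfl fun i _ => mul_comm _ _

lemma Bc_add_right (x y y' : Fin (n + 1) → ℂ) :
    Bc n x (y + y') = Bc n x y + Bc n x y' := by
  rw [Bc_comm, Bc_add_left, Bc_comm y x, Bc_comm y' x]

lemma Bc_smul_right (c : ℂ) (x y : Fin (n + 1) → ℂ) :
    Bc n x (c • y) = c * Bc n x y := by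
  rw [Bc_comm, Bc_smul_left, Bc_comm]

lemma Bc_ofR (a b : Fin (n + 1) → ℝ) :
    Bc n (ofR a) (ofR b) = ((Br n a b : ℝ) : ℂ) := by
  simp only [Bc, ofR, Br]
  push_cast
  ring

lemma ofR_mulVec (M : Matrix (Fin (n + 1)) (Fin (n + 1)) ℝ) (a : Fin (n + 1) → ℝ) :
    (M.map (Complex.ofReal : ℝ → ℂ)) *ᵥ (ofR a) = ofR (M *ᵥ a) := by
  funext i
  simp [ofR, Matrix.mulVec, dotProduct, Matrix.map_apply]

lemma decomp (x : Fin (n + 1) → ℂ) :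
    x = ofR (fun i => (x i).re) + Complex.I • ofR (fun i => (x i).im) := by
  funext i
  simp only [Pi.add_apply, Pi.smul_apply, ofR, smul_eq_mul]
  rw [mul_comm]
  exact (Complex.re_add_im (x i)).symm

lemma isotropic_dependent {m : ℕ} (v y : Fin (m + 1) → ℝ)
    (hv0 : v 0 ≠ 0) (hvv : Br m v v = 0) (hyy : Br m y y = 0) (hvy : Br m v y = 0) :
    y = (y 0 / v 0) • v := by
  have hSv : ∑ i : Fin m, v i.succ * v i.succ = v 0 * v 0 := by
    have := hvv; unfold Br at this; linarith
  have hSy : ∑ i : Fin m, y i.succ * y i.succ = y 0 * y 0 := by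
    have := hyy; unfold Br at this; linarith
  have hSvy : ∑ i : Fin m, v i.succ * y i.succ = v 0 * y 0 := by
    have := hvy; unfold Br at this; linarith
  have hsum : ∑ i : Fin m, (v 0 * y i.succ - y 0 * v i.succ) ^ 2 = 0 := by
    have expand : ∑ i : Fin m, (v 0 * y i.succ - y 0 * v i.succ) ^ 2
        = (v 0 * v 0) * (∑ i : Fin m, y i.succ * y i.succ)
          - (2 * (v 0 * y 0)) * (∑ i : Fin m, v i.succ * y i.succ)
          + (y 0 * y 0) * (∑ i : Fin m, v i.succ * v i.succ) := by
      rw [Finset.mul_sum, Finset.mul_sum, Finset.mul_sum, ← Finset.sum_sub_distrib,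
        ← Finset.sum_add_distrib]
      exact Finset.sum_congr rfl fun i _ => by ring
    rw [expand, hSv, hSy, hSvy]; ring
  have key : ∀ i : Fin m, v 0 * y i.succ - y 0 * v i.succ = 0 := by
    intro i
    have h := (Finset.sum_eq_zero_iff_of_nonneg (fun j _ => sq_nonneg _)).1 hsum i
      (Finset.mem_univ i)
    exact pow_eq_zero_iff (two_ne_zero) |>.1 h
  funext j
  induction j using Fin.cases with
  | zero => simp only [Pi.smul_apply, smul_eq_mul]; field_simp
  | succ i =>
    have h := key i
    simp only [Pi.smul_apply, smul_eq_mul]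
    field_simp
    linarith

end ParabolicAux

open ParabolicAux

/-- An isometry of a real quadratic space of signature (1, n) fixing a nonzero isotropic
vector has all complex eigenvalues of absolute value 1 (i.e., it is of zero entropy). -/
theorem parabolic_isometry_eigenvalues_abs_one (n : ℕ)
    (B : (Fin (n + 1) → ℝ) → (Fin (n + 1) → ℝ) → ℝ)
    -- B is the standard bilinear form of signature (1, n)
    (hB : ∀ x y, B x y = x 0 * y 0 - ∑ i : Fin n, x i.succ * y i.succ)
    (M : Matrix (Fin (n + 1)) (Fin (n + 1)) ℝ) (hM : IsUnit M.det)
    (hiso : ∀ x y, B (M.mulVec x) (M.mulVec y) = B x y)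
    (v : Fin (n + 1) → ℝ) (hv : v ≠ 0) (hvv : B v v = 0) (hfix : M.mulVec v = v) :
    ∀ z : ℂ, (M.map (Complex.ofReal : ℝ → ℂ)).charpoly.IsRoot z → ‖z‖ = 1 := by
  intro z hz
  by_contra habs
  set Mc := M.map (Complex.ofReal : ℝ → ℂ) with hMcdef
  -- eigenvector
  have hdet : (Matrix.scalar (Fin (n + 1)) z - Mc).det = 0 := by
    have h := hz
    rw [Polynomial.IsRoot, Matrix.charpoly, eval_det, Matrix.matPolyEquiv_charmatrix,
      Polynomial.eval_sub, Polynomial.eval_X, Polynomial.eval_C] at h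
    exact h
  obtain ⟨w, hw0, hw⟩ := Matrix.exists_mulVec_eq_zero_iff.2 hdet
  have heig : Mc *ᵥ w = z • w := by
    have h1 : (Matrix.scalar (Fin (n + 1)) z) *ᵥ w - Mc *ᵥ w = 0 := by
      rw [← Matrix.sub_mulVec]; exact hw
    have h2 : (Matrix.scalar (Fin (n + 1)) z) *ᵥ w = z • w := by
      funext i
      simp [Matrix.scalar_apply, Matrix.mulVec_diagonal]
    rw [h2, sub_eq_zero] at h1
    exact h1.symm
  -- complexified invariance
  have hiso' : ∀ p q : Fin (n + 1) → ℝ,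
      Bc n (Mc *ᵥ ofR p) (Mc *ᵥ ofR q) = Bc n (ofR p) (ofR q) := by
    intro p q
    rw [hMcdef, ofR_mulVec, ofR_mulVec, Bc_ofR, Bc_ofR]
    have h := hiso p q
    rw [hB, hB] at h
    unfold ParabolicAux.Br
    exact_mod_cast h
  have hisoC : ∀ x y : Fin (n + 1) → ℂ, Bc n (Mc *ᵥ x) (Mc *ᵥ y) = Bc n x y := by
    intro x y
    rw [decomp x, decomp y]
    simp only [Matrix.mulVec_add, Matrix.mulVec_smul, Bc_add_left, Bc_add_right,
      Bc_smul_left, Bc_smul_right, hiso']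
  have hMcv : Mc *ᵥ ofR v = ofR v := by rw [hMcdef, ofR_mulVec, hfix]
  -- facts about z
  have habs2 : ‖z‖ ^ 2 ≠ 1 := by
    intro h
    have h0 := norm_nonneg z
    have h3 : (‖z‖ - 1) * (‖z‖ + 1) = 0 := by nlinarith
    rcases mul_eq_zero.1 h3 with h' | h'
    · exact habs (by linarith)
    · linarith
  have hz2 : z * z ≠ 1 := by
    intro h
    apply habs2
    rw [sq, ← norm_mul, h, norm_one]
  have hzc : z * (starRingEnd ℂ) z ≠ 1 := by
    rw [Complex.mul_conj]
    intro h
    apply habs2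
    rw [← Complex.normSq_eq_norm_sq]
    exact_mod_cast h
  have hz1 : z ≠ 1 := fun h => habs (by rw [h]; simp)
  -- conjugate eigenvector
  have heigs : Mc *ᵥ (star w) = (starRingEnd ℂ) z • star w := by
    funext i
    have h1 : (Mc *ᵥ star w) i = (starRingEnd ℂ) ((Mc *ᵥ w) i) := by
      simp [Matrix.mulVec, dotProduct, map_sum, hMcdef, Matrix.map_apply,
        Complex.conj_ofReal]
    rw [h1, heig]
    simp
  -- vanishing of the form on w
  have hBww : Bc n w w = 0 := by
    have h := hisoC w w
    rw [heig, Bc_smul_left, Bc_smul_right] at h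
    have h5 : (z * z - 1) * Bc n w w = 0 := by linear_combination h
    rcases mul_eq_zero.1 h5 with h' | h'
    · exact absurd (by linear_combination h') hz2
    · exact h'
  have hBwws : Bc n w (star w) = 0 := by
    have h := hisoC w (star w)
    rw [heig, heigs, Bc_smul_left, Bc_smul_right] at h
    have h5 : (z * (starRingEnd ℂ) z - 1) * Bc n w (star w) = 0 := by linear_combination h
    rcases mul_eq_zero.1 h5 with h' | h'
    · exact absurd (by linear_combination h') hzc
    · exact h'
  have hBwv : Bc n w (ofR v) = 0 := by
    have h := hisoC w (ofR v)
    rw [heig, hMcv, Bc_smul_left] at h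
    have h5 : (z - 1) * Bc n w (ofR v) = 0 := by linear_combination h
    rcases mul_eq_zero.1 h5 with h' | h'
    · exact absurd (by linear_combination h') hz1
    · exact h'
  -- real and imaginary parts
  set a : Fin (n + 1) → ℝ := fun i => (w i).re with hadef
  set b : Fin (n + 1) → ℝ := fun i => (w i).im with hbdef
  have hwdec : w = ofR a + Complex.I • ofR b := decomp w
  have hwsdec : star w = ofR a - Complex.I • ofR b := by
    funext i
    simp only [Pi.star_apply, Pi.sub_apply, Pi.add_apply, Pi.smul_apply, ofR, smul_eq_mul]
    apply Complex.ext <;> simp [hadef, hbdef]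
  have hav : Br n a v = 0 ∧ Br n b v = 0 := by
    rw [hwdec, Bc_add_left, Bc_smul_left, Bc_ofR, Bc_ofR] at hBwv
    constructor
    · have h := congrArg Complex.re hBwv; simpa using h
    · have h := congrArg Complex.im hBwv; simpa using h
  have habr : Br n a a - Br n b b = 0 := by
    rw [hwdec, Bc_add_left, Bc_add_right, Bc_add_right, Bc_smul_left, Bc_smul_left,
      Bc_smul_right, Bc_smul_right, Bc_ofR, Bc_ofR, Bc_ofR, Bc_ofR] at hBww
    have h := congrArg Complex.re hBww
    simp at h
    linarith [h]
  have habs' : Br n a a + Br n b b = 0 := by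
    rw [hwsdec, hwdec, Bc_add_left, Bc_smul_left] at hBwws
    rw [show ofR a - Complex.I • ofR b = ofR a + (-Complex.I) • ofR b by module] at hBwws
    rw [Bc_add_right, Bc_add_right, Bc_smul_right, Bc_smul_right, Bc_ofR, Bc_ofR,
      Bc_ofR, Bc_ofR] at hBwws
    have h := congrArg Complex.re hBwws
    simp at h
    linarith [h]
  have haa : Br n a a = 0 := by linarith
  have hbb : Br n b b = 0 := by linarith
  -- v is isotropic with v 0 ≠ 0
  have hBrvv : Br n v v = 0 := by rw [hB] at hvv; exact hvv
  have hv0 : v 0 ≠ 0 := by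
    intro h0
    apply hv
    have hs : ∑ i : Fin n, v i.succ * v i.succ = 0 := by
      unfold ParabolicAux.Br at hBrvv
      rw [h0] at hBrvv
      linarith
    funext j
    induction j using Fin.cases with
    | zero => exact h0
    | succ i =>
      have h := (Finset.sum_eq_zero_iff_of_nonneg (fun j _ => mul_self_nonneg _)).1 hs i
        (Finset.mem_univ i)
      exact mul_self_eq_zero.1 h
  -- a and b are multiples of v
  have hda := isotropic_dependent v a hv0 hBrvv haa (by rw [Br_comm]; exact hav.1)
  have hdb := isotropic_dependent v b hv0 hBrvv hbb (by rw [Br_comm]; exact hav.2)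
  set c : ℂ := ((a 0 / v 0 : ℝ) : ℂ) + ((b 0 / v 0 : ℝ) : ℂ) * Complex.I with hcdef
  have hwc : w = c • ofR v := by
    funext i
    have h1 : a i = (a 0 / v 0) * v i := by
      have h := congrFun hda i; simpa using h
    have h2 : b i = (b 0 / v 0) * v i := by
      have h := congrFun hdb i; simpa using h
    apply Complex.ext
    · simpa [ofR, hcdef, Complex.mul_re, hadef] using h1
    · simpa [ofR, hcdef, Complex.mul_im, hbdef] using h2
  rw [hwc, Matrix.mulVec_smul, hMcv, ← hwc] at heig
  obtain ⟨i, hi⟩ := Function.ne_iff.1 hw0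
  have hwi : w i = z * w i := congrFun heig i
  have : (z - 1) * w i = 0 := by linear_combination hwi.symm
  rcases mul_eq_zero.1 this with h' | h'
  · exact hz1 (by linear_combination h')
  · exact hi (by simpa using h')
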